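/- For $\epsilon = \tfrac12$, the commuting operator $J_{1/2} = (\mathcal{P}\otimes I)Q_{1/2}$ with $Q_{1/2} = \begin{pmatrix} \Delta & 2g(g-a) \\ 2g(g+a^\dagger) & \Delta \end{pmatrix}$ satisfies $J_{1/2}^2 = 4g^2 H^{1/2} + (4g^4 + 2g^2 + \Delta^2) I$. -/
import Mathlib


open Polynomial

noncomputable section

/-- The space of operators on `ℂ[x]`. -/
abbrev E := Module.End ℂ (Polynomial ℂ)

/-- Annihilation operator `a = d/dx`. -/
def opA : E := Polynomial.derivative

/-- Creation operator `a† = ` multiplication by `x`. -/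
def opC : E := LinearMap.mulLeft ℂ (X : Polynomial ℂ)

/-- Parity operator `(𝒫 f)(x) = f(-x)`. -/
def opP : E := (aeval (-X : Polynomial ℂ)).toLinearMap

/-- `2×2` matrices of operators, i.e. operators on `ℂ[x] ⊗ ℂ²`. -/
abbrev M2 := Matrix (Fin 2) (Fin 2) E

/-- The asymmetric quantum Rabi Hamiltonian
`H^ε = a†a + Δ σx + g (a+a†) σz + ε σz`. -/
def Hop (g Δ ε : ℝ) : M2 :=
  !![opC * opA + (g : ℂ) • (opA + opC) + (ε : ℂ) • 1, (Δ : ℂ) • 1;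
     (Δ : ℂ) • 1, opC * opA - (g : ℂ) • (opA + opC) - (ε : ℂ) • 1]

/-- The parity operator `𝒫 ⊗ I` on `ℂ[x] ⊗ ℂ²`. -/
def Pm : M2 := !![opP, 0; 0, opP]

end

/-- The matrix `Q_{1/2}` for `ε = 1/2`. -/
noncomputable def Q12 (g Δ : ℝ) : M2 :=
  !![(Δ : ℂ) • 1, (2 * g * g : ℂ) • 1 - (2 * g : ℂ) • opA;
     (2 * g * g : ℂ) • 1 + (2 * g : ℂ) • opC, (Δ : ℂ) • 1]


lemma hP2 : opP * opP = 1 := by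
  apply LinearMap.ext; intro p
  simp [opP, Module.End.mul_apply, ← comp_eq_aeval, comp_assoc]

lemma hPA : opP * opA = -(opA * opP) := by
  apply LinearMap.ext; intro p
  simp [opP, opA, Module.End.mul_apply, ← comp_eq_aeval, derivative_comp]

lemma hPC : opP * opC = -(opC * opP) := by
  apply LinearMap.ext; intro p
  simp [opP, opC, Module.End.mul_apply, ← comp_eq_aeval, mul_comp]

lemma hAC : opA * opC = opC * opA + 1 := by
  apply LinearMap.ext; intro p
  simp [opA, opC, Module.End.mul_apply, derivative_mul, mul_comm]

lemma step1 (g Δ : ℝ) : Pm * Q12 g Δ =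
    !![(Δ:ℂ) • opP, (2*g*g:ℂ) • opP - (2*g:ℂ) • (opP * opA);
       (2*g*g:ℂ) • opP + (2*g:ℂ) • (opP * opC), (Δ:ℂ) • opP] := by
  rw [Pm, Q12, Matrix.mul_fin_two]
  simp [mul_smul_comm, mul_sub, mul_add, mul_one]
  norm_cast

lemma negmulE (x y : E) : -x * y = -(x * y) := neg_mul x y
lemma mulnegE (x y : E) : x * -y = -(x * y) := mul_neg x y

lemma hPPC : opP * (opP * opC) = opC := by rw [← mul_assoc, hP2, one_mul]
lemma hPPA : opP * (opP * opA) = opA := by rw [← mul_assoc, hP2, one_mul]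
lemma hPAP : (opP * opA) * opP = -opA := by
  rw [hPA]; simp only [negmulE, mul_assoc, hP2, mul_one]
lemma hPCP : (opP * opC) * opP = -opC := by
  rw [hPC]; simp only [negmulE, mul_assoc, hP2, mul_one]
lemma hPAPC : (opP * opA) * (opP * opC) = -(opC * opA) - 1 := by
  rw [← mul_assoc, hPAP]; simp only [negmulE, hAC]; abel
lemma hPCPA : (opP * opC) * (opP * opA) = -(opC * opA) := by
  rw [← mul_assoc, hPCP]; simp only [negmulE]

/-- `J_{1/2}² = 4g² H^{1/2} + (4g⁴ + 2g² + Δ²) I`. -/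
theorem J12_sq (g Δ : ℝ) :
    (Pm * Q12 g Δ) * (Pm * Q12 g Δ) =
      ((4 * g^2 : ℝ) : ℂ) • Hop g Δ (1/2) +
        ((4 * g^4 + 2 * g^2 + Δ^2 : ℝ) : ℂ) • (1 : M2) := by
  rw [step1, Matrix.mul_fin_two, Hop]
  have hone : (1 : M2) = !![1, 0; 0, 1] := by
    rw [← Matrix.one_fin_two]
  rw [hone]
  rw [Matrix.smul_of, Matrix.smul_of]
  refine Matrix.ext fun i j => ?_
  fin_cases i <;> fin_cases j <;>
    simp only [Fin.zero_eta, Fin.mk_one, Fin.isValue, Matrix.cons_val', Matrix.cons_val_zero,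
      Matrix.cons_val_one, Matrix.head_cons, Matrix.head_fin_const, Matrix.empty_val',
      Matrix.cons_val_fin_one, Matrix.of_apply, Matrix.add_apply, Pi.smul_apply,
      Matrix.smul_apply] <;>
    simp only [smul_mul_assoc, mul_smul_comm, smul_smul, mul_add, add_mul, mul_sub, sub_mul,
      smul_add, smul_sub, hP2, hPPC, hPPA, hPAP, hPCP, hPAPC, hPCPA, smul_neg, neg_smul] <;>
    push_cast <;>
    module
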